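/- arXiv:1504.03662 — 3 statements merged into one kernel-verified Lean document; each statement's English description precedes it below -/
import Mathlib

section
/- For every n with n = 3 or n ≥ 5, the cycle C_n satisfies ρ⊥(C_n) = 3: C_n admits a faithful orthogonal representation in ℝ^3 but none in ℝ^2. -/
/-- A faithful orthogonal representation (FOR) of the graph `G` in dimension `d`:
an injective map assigning a nonzero vector of `ℝ^d` to each vertex, such that
distinct vertices are adjacent iff their vectors are orthogonal. -/
def IsFOR {V : Type*} (G : SimpleGraph V) (d : ℕ)
    (σ : V → EuclideanSpace ℝ (Fin d)) : Prop :=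
  Function.Injective σ ∧ (∀ v, σ v ≠ 0) ∧
    ∀ i j : V, i ≠ j → (G.Adj i j ↔ inner ℝ (σ i) (σ j) = (0 : ℝ))

/-- `G` has a faithful orthogonal representation in dimension `d`. -/
def HasFOR {V : Type*} (G : SimpleGraph V) (d : ℕ) : Prop :=
  ∃ σ : V → EuclideanSpace ℝ (Fin d), IsFOR G d σ

/-- The faithful orthogonal rank `ρ⊥(G)`: the minimum dimension admitting a FOR. -/
noncomputable def forRank {V : Type*} (G : SimpleGraph V) : ℕ :=
  sInf {d | HasFOR G d}

open Real


open Real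

/-- Auxiliary: cosines of integers agree iff the integers agree up to sign. -/
lemma cosIntEq (a b : ℤ) : Real.cos a = Real.cos b ↔ (a = b ∨ a = -b) := by
  constructor
  · intro h
    rcases Real.cos_eq_cos_iff.1 h with ⟨k, hk | hk⟩
    · rcases eq_or_ne k 0 with rfl | hk0
      · left
        have : (a:ℝ) = ((b:ℤ):ℝ) := by push_cast at hk ⊢; linarith
        exact_mod_cast this
      · exfalso
        have h2 : ((2*k : ℤ) : ℝ) * π = ((b - a : ℤ) : ℝ) := by push_cast; linarith
        exact Int.not_irrational (b - a) (h2 ▸ irrational_pi.intCast_mul (by omega))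
    · rcases eq_or_ne k 0 with rfl | hk0
      · right
        have : (a:ℝ) = ((-b:ℤ):ℝ) := by push_cast at hk ⊢; linarith
        exact_mod_cast this
      · exfalso
        have h2 : ((2*k : ℤ) : ℝ) * π = ((b + a : ℤ) : ℝ) := by push_cast; linarith
        exact Int.not_irrational (b + a) (h2 ▸ irrational_pi.intCast_mul (by omega))
  · rintro (rfl | rfl)
    · rfl
    · push_cast; rw [Real.cos_neg]

/-- Auxiliary: a value-level description of adjacency in the cycle graph. -/
lemma cycleAdjIff {n : ℕ} (hn : 3 ≤ n) (u v : Fin n) :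
    (SimpleGraph.cycleGraph n).Adj u v ↔
      (u.val = v.val + 1 ∨ v.val = u.val + 1 ∨ (u.val = 0 ∧ v.val + 1 = n) ∨
        (v.val = 0 ∧ u.val + 1 = n)) := by
  have key : ∀ a b : Fin n, ((a - b).val = 1 ↔ (a.val = b.val + 1 ∨ a.val + n = b.val + 1)) := by
    intro a b
    have ha := a.isLt; have hb := b.isLt
    rw [Fin.sub_def]
    simp only [Fin.val_mk]
    rcases le_or_gt b.val a.val with h | h
    · have h1 : n - b.val + a.val = (a.val - b.val) + n := by omega
      rw [h1, Nat.add_mod_right, Nat.mod_eq_of_lt (by omega)]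
      omega
    · rw [Nat.mod_eq_of_lt (by omega)]
      omega
  rw [SimpleGraph.cycleGraph_adj', key u v, key v u]
  have := u.isLt; have := v.isLt
  omega

lemma hasFOR_three (n : ℕ) (hn : n = 3 ∨ 5 ≤ n) :
    HasFOR (SimpleGraph.cycleGraph n) 3 := by
  have h3 : 3 ≤ n := by omega
  have h4 : n ≠ 4 := by omega
  have hcos2 : Real.cos 2 < 0 := by
    apply Real.cos_neg_of_pi_div_two_lt_of_lt
    · nlinarith [Real.pi_lt_four]
    · nlinarith [Real.pi_gt_three]
  set t : ℝ := Real.sqrt (-Real.cos 2) with ht_def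
  have htt : t * t = -Real.cos 2 := Real.mul_self_sqrt (by linarith)
  have ht0 : 0 < t := Real.sqrt_pos.2 (by linarith)
  set t' : ℝ := -Real.cos (((n:ℤ) - 2 : ℤ)) / t with ht'_def
  have ht't : t' * t = -Real.cos (((n:ℤ) - 2 : ℤ)) := div_mul_cancel₀ _ (ne_of_gt ht0)
  set θ : Fin n → ℤ := fun k => if k.val = 0 then (n:ℤ) - 2 else 2*(k.val:ℤ) - 2 with hθ_def
  set z : Fin n → ℝ := fun k => if k.val = 0 then t' else t with hz_def
  set σ : Fin n → EuclideanSpace ℝ (Fin 3) :=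
    fun k => !₂[Real.cos (θ k), Real.sin (θ k), z k] with hσ_def
  have hc2 : ((2:ℤ):ℝ) = (2:ℝ) := by norm_num
  have hinner : ∀ i j : Fin n,
      (inner ℝ (σ i) (σ j) : ℝ) = Real.cos ((θ i - θ j : ℤ)) + z i * z j := by
    intro i j
    have h1 : (inner ℝ (σ i) (σ j) : ℝ) =
        Real.cos (θ i) * Real.cos (θ j) + Real.sin (θ i) * Real.sin (θ j) + z i * z j := by
      simp [hσ_def, PiLp.inner_apply, Fin.sum_univ_three]; ring
    rw [h1]
    push_cast
    rw [Real.cos_sub]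
  -- injectivity
  have hinj : Function.Injective σ := by
    intro i j hij
    have hc : Real.cos (θ i) = Real.cos (θ j) := by simpa [hσ_def] using congrFun (congrArg WithLp.ofLp hij) 0
    have hs : Real.sin (θ i) = Real.sin (θ j) := by simpa [hσ_def] using congrFun (congrArg WithLp.ofLp hij) 1
    have hz : z i = z j := by simpa [hσ_def] using congrFun (congrArg WithLp.ofLp hij) 2
    have h1 : Real.cos ((θ i - θ j : ℤ)) = Real.cos ((0:ℤ)) := by
      push_cast
      rw [Real.cos_sub, hc, hs, Real.cos_zero]
      nlinarith [Real.sin_sq_add_cos_sq ((θ j : ℝ))]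
    have h2 : θ i = θ j := by have := (cosIntEq _ _).1 h1; omega
    have hi' := i.isLt; have hj' := j.isLt
    by_cases hi : i.val = 0 <;> by_cases hj : j.val = 0
    · exact Fin.ext (by omega)
    · exfalso
      simp only [hθ_def, hi, hj, if_pos rfl, if_neg hj, if_true] at h2
      simp only [hz_def, hi, hj, if_pos rfl, if_neg hj, if_true] at hz
      have hcc : Real.cos (((n:ℤ) - 2 : ℤ)) = Real.cos ((2:ℤ)) := by
        have : t' * t = t * t := by rw [hz]
        rw [htt, ht't] at this
        rw [hc2]; linarith
      have := (cosIntEq _ _).1 hcc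
      omega
    · exfalso
      simp only [hθ_def, hi, hj, if_pos rfl, if_neg hi, if_true] at h2
      simp only [hz_def, hi, hj, if_pos rfl, if_neg hi, if_true] at hz
      have hcc : Real.cos (((n:ℤ) - 2 : ℤ)) = Real.cos ((2:ℤ)) := by
        have : t' * t = t * t := by rw [hz]
        rw [htt, ht't] at this
        rw [hc2]; linarith
      have := (cosIntEq _ _).1 hcc
      omega
    · refine Fin.ext ?_
      simp only [hθ_def, if_neg hi, if_neg hj] at h2
      omega
  -- nonzero
  have hnz : ∀ k, σ k ≠ 0 := by
    intro k hk
    have h0 : Real.cos (θ k) = 0 := by simpa [hσ_def] using congrFun (congrArg WithLp.ofLp hk) 0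
    have h1 : Real.sin (θ k) = 0 := by simpa [hσ_def] using congrFun (congrArg WithLp.ofLp hk) 1
    nlinarith [Real.sin_sq_add_cos_sq ((θ k : ℝ))]
  -- orthogonality
  have main : ∀ i j : Fin n, i ≠ j → j.val ≠ 0 →
      ((SimpleGraph.cycleGraph n).Adj i j ↔ (inner ℝ (σ i) (σ j) : ℝ) = 0) := by
    intro i j hij hj
    have hij' : i.val ≠ j.val := fun h => hij (Fin.ext h)
    have hi' := i.isLt; have hj' := j.isLt
    by_cases hi : i.val = 0
    · have e1 : (inner ℝ (σ i) (σ j) : ℝ) =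
          Real.cos (((n:ℤ) - 2*(j.val:ℤ) : ℤ)) - Real.cos (((n:ℤ) - 2 : ℤ)) := by
        rw [hinner]
        have hA : θ i - θ j = ((n:ℤ) - 2*(j.val:ℤ) : ℤ) := by
          simp only [hθ_def, if_pos hi, if_neg hj]; ring
        have hzz : z i * z j = -Real.cos (((n:ℤ) - 2 : ℤ)) := by
          simp only [hz_def, if_pos hi, if_neg hj]; exact ht't
        rw [hA, hzz]; ring
      have e2 : (inner ℝ (σ i) (σ j) : ℝ) = 0 ↔
          ((n:ℤ) - 2*(j.val:ℤ) = (n:ℤ) - 2 ∨ (n:ℤ) - 2*(j.val:ℤ) = -((n:ℤ) - 2)) := by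
        rw [e1, sub_eq_zero]; exact cosIntEq _ _
      rw [e2, cycleAdjIff h3]
      omega
    · have e1 : (inner ℝ (σ i) (σ j) : ℝ) =
          Real.cos ((2*(i.val:ℤ) - 2*(j.val:ℤ) : ℤ)) - Real.cos ((2 : ℤ)) := by
        rw [hinner]
        have hA : θ i - θ j = (2*(i.val:ℤ) - 2*(j.val:ℤ) : ℤ) := by
          simp only [hθ_def, if_neg hi, if_neg hj]; ring
        have hzz : z i * z j = -Real.cos ((2 : ℤ)) := by
          simp only [hz_def, if_neg hi, if_neg hj]
          rw [htt, hc2]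
        rw [hA, hzz]; ring
      have e2 : (inner ℝ (σ i) (σ j) : ℝ) = 0 ↔
          (2*(i.val:ℤ) - 2*(j.val:ℤ) = 2 ∨ 2*(i.val:ℤ) - 2*(j.val:ℤ) = -2) := by
        rw [e1, sub_eq_zero]; exact cosIntEq _ _
      rw [e2, cycleAdjIff h3]
      omega
  refine ⟨σ, hinj, hnz, ?_⟩
  intro i j hij
  by_cases hj : j.val = 0
  · have hi : i.val ≠ 0 := fun h => hij (Fin.ext (h.trans hj.symm))
    rw [SimpleGraph.adj_comm, real_inner_comm]
    exact main j i hij.symm hi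
  · exact main i j hij hj


lemma noFOR_two (n : ℕ) (hn : n = 3 ∨ 5 ≤ n) :
    ¬ HasFOR (SimpleGraph.cycleGraph n) 2 := by
  have h3 : 3 ≤ n := by omega
  rintro ⟨σ, hinj, hnz, hiff⟩
  have hnz2 : ∀ v, σ v 0 ≠ 0 ∨ σ v 1 ≠ 0 := by
    intro v
    by_contra h
    push_neg at h
    refine hnz v ?_
    ext i
    fin_cases i
    · exact h.1
    · exact h.2
  have hin : ∀ u v : Fin n, (inner ℝ (σ u) (σ v) : ℝ) = σ u 0 * σ v 0 + σ u 1 * σ v 1 := by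
    intro u v
    simp [PiLp.inner_apply, Fin.sum_univ_two]; ring
  set v0 : Fin n := ⟨0, by omega⟩ with hv0
  set v1 : Fin n := ⟨1, by omega⟩ with hv1
  set v2 : Fin n := ⟨2, by omega⟩ with hv2
  have hne01 : v0 ≠ v1 := fun h => by simp [hv0, hv1, Fin.ext_iff] at h
  have hne12 : v1 ≠ v2 := fun h => by simp [hv1, hv2, Fin.ext_iff] at h
  have hadj01 : (SimpleGraph.cycleGraph n).Adj v0 v1 := by
    rw [cycleAdjIff h3]; simp [hv0, hv1]
  have hadj12 : (SimpleGraph.cycleGraph n).Adj v1 v2 := by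
    rw [cycleAdjIff h3]; simp [hv1, hv2]
  have hab : σ v0 0 * σ v1 0 + σ v0 1 * σ v1 1 = 0 := by
    rw [← hin]; exact (hiff v0 v1 hne01).1 hadj01
  have hcb : σ v2 0 * σ v1 0 + σ v2 1 * σ v1 1 = 0 := by
    rw [← hin]; exact (hiff v2 v1 hne12.symm).1 hadj12.symm
  have hpar : σ v0 0 * σ v2 1 - σ v0 1 * σ v2 0 = 0 := by
    rcases hnz2 v1 with h | h
    · have key : (σ v0 0 * σ v2 1 - σ v0 1 * σ v2 0) * σ v1 0 = 0 := by
        linear_combination σ v2 1 * hab - σ v0 1 * hcb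
      exact (mul_eq_zero.1 key).resolve_right h
    · have key : (σ v0 0 * σ v2 1 - σ v0 1 * σ v2 0) * σ v1 1 = 0 := by
        linear_combination σ v0 0 * hcb - σ v2 0 * hab
      exact (mul_eq_zero.1 key).resolve_right h
  rcases hn with rfl | hn5
  · -- n = 3 : triangle
    have hne20 : v2 ≠ v0 := fun h => by simp [hv0, hv2, Fin.ext_iff] at h
    have hadj20 : (SimpleGraph.cycleGraph 3).Adj v2 v0 := by
      rw [cycleAdjIff h3]; simp [hv0, hv2]
    have hca : σ v2 0 * σ v0 0 + σ v2 1 * σ v0 1 = 0 := by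
      rw [← hin]; exact (hiff v2 v0 hne20).1 hadj20
    have ha2 : σ v0 0 * σ v0 0 + σ v0 1 * σ v0 1 ≠ 0 := by
      rcases hnz2 v0 with h | h
      · nlinarith [mul_self_nonneg (σ v0 1), mul_self_pos.2 h]
      · nlinarith [mul_self_nonneg (σ v0 0), mul_self_pos.2 h]
    have hc0 : σ v2 0 = 0 := by
      have key : (σ v0 0 * σ v0 0 + σ v0 1 * σ v0 1) * σ v2 0 = 0 := by
        linear_combination σ v0 0 * hca - σ v0 1 * hpar
      exact (mul_eq_zero.1 key).resolve_left ha2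
    have hc1 : σ v2 1 = 0 := by
      have key : (σ v0 0 * σ v0 0 + σ v0 1 * σ v0 1) * σ v2 1 = 0 := by
        linear_combination σ v0 1 * hca + σ v0 0 * hpar
      exact (mul_eq_zero.1 key).resolve_left ha2
    rcases hnz2 v2 with h | h
    · exact h hc0
    · exact h hc1
  · -- n ≥ 5
    set v3 : Fin n := ⟨3, by omega⟩ with hv3
    have hne23 : v2 ≠ v3 := fun h => by simp [hv2, hv3, Fin.ext_iff] at h
    have hne03 : v0 ≠ v3 := fun h => by simp [hv0, hv3, Fin.ext_iff] at h
    have hadj23 : (SimpleGraph.cycleGraph n).Adj v2 v3 := by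
      rw [cycleAdjIff h3]; simp [hv2, hv3]
    have hcd : σ v2 0 * σ v3 0 + σ v2 1 * σ v3 1 = 0 := by
      rw [← hin]; exact (hiff v2 v3 hne23).1 hadj23
    have had : σ v0 0 * σ v3 0 + σ v0 1 * σ v3 1 = 0 := by
      rcases hnz2 v2 with h | h
      · have key : (σ v0 0 * σ v3 0 + σ v0 1 * σ v3 1) * σ v2 0 = 0 := by
          linear_combination σ v0 0 * hcd - σ v3 1 * hpar
        exact (mul_eq_zero.1 key).resolve_right h
      · have key : (σ v0 0 * σ v3 0 + σ v0 1 * σ v3 1) * σ v2 1 = 0 := by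
          linear_combination σ v0 1 * hcd + σ v3 0 * hpar
        exact (mul_eq_zero.1 key).resolve_right h
    have hadj03 : (SimpleGraph.cycleGraph n).Adj v0 v3 := by
      refine (hiff v0 v3 hne03).2 ?_
      rw [hin]; exact had
    rw [cycleAdjIff h3] at hadj03
    simp [hv0, hv3] at hadj03
    omega

lemma noFOR_one (n : ℕ) (hn : n = 3 ∨ 5 ≤ n) :
    ¬ HasFOR (SimpleGraph.cycleGraph n) 1 := by
  have h3 : 3 ≤ n := by omega
  rintro ⟨σ, hinj, hnz, hiff⟩
  set v0 : Fin n := ⟨0, by omega⟩ with hv0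
  set v1 : Fin n := ⟨1, by omega⟩ with hv1
  have hne01 : v0 ≠ v1 := fun h => by simp [hv0, hv1, Fin.ext_iff] at h
  have hadj01 : (SimpleGraph.cycleGraph n).Adj v0 v1 := by
    rw [cycleAdjIff h3]; simp [hv0, hv1]
  have h0 : (inner ℝ (σ v0) (σ v1) : ℝ) = σ v0 0 * σ v1 0 := by
    simp [PiLp.inner_apply, Fin.sum_univ_one]; ring
  have := (hiff v0 v1 hne01).1 hadj01
  rw [h0] at this
  rcases mul_eq_zero.1 this with h | h
  · refine hnz v0 ?_
    ext i
    fin_cases i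
    exact h
  · refine hnz v1 ?_
    ext i
    fin_cases i
    exact h

lemma noFOR_zero (n : ℕ) (hn : n = 3 ∨ 5 ≤ n) :
    ¬ HasFOR (SimpleGraph.cycleGraph n) 0 := by
  have h3 : 3 ≤ n := by omega
  rintro ⟨σ, hinj, hnz, hiff⟩
  exact hnz ⟨0, by omega⟩ (Subsingleton.elim _ _)


/-- For `n = 3` or `n ≥ 5`, `ρ⊥(C_n) = 3`: `C_n` has a FOR in `ℝ^3` but none in `ℝ^2`. -/
theorem stmt_5 (n : ℕ) (hn : n = 3 ∨ 5 ≤ n) :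
    HasFOR (SimpleGraph.cycleGraph n) 3 ∧ ¬ HasFOR (SimpleGraph.cycleGraph n) 2 ∧
      forRank (SimpleGraph.cycleGraph n) = 3 := by
  have hpos := hasFOR_three n hn
  have h2 := noFOR_two n hn
  refine ⟨hpos, h2, ?_⟩
  have hS3 : 3 ∈ {d | HasFOR (SimpleGraph.cycleGraph n) d} := hpos
  refine le_antisymm (Nat.sInf_le hS3) ?_
  refine le_csInf ⟨3, hS3⟩ ?_
  intro b hb
  by_contra hlt
  push_neg at hlt
  interval_cases b
  · exact noFOR_zero n hn hb
  · exact noFOR_one n hn hb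
  · exact h2 hb
end

section
/- For every n ≥ 5, the complement of the cycle C_n satisfies ρ⊥(C̄_n) = n − 2: the complement of C_n admits a faithful orthogonal representation in ℝ^{n−2} and none in any smaller dimension. -/
open SimpleGraph Finset

namespace ForRankCycleAux

/-- The explicit FOR of the complement of the cycle on `m+2` vertices in `ℝ^m`:
vertex `0 ≤ i ≤ m` is sent to `e_{i-1} + e_i` (truncated to valid coordinates),
and vertex `m+1` is sent to the alternating vector `(1, -1, 1, …)`. -/
noncomputable def sig (m : ℕ) : Fin (m+2) → EuclideanSpace ℝ (Fin m) :=
  fun i => WithLp.toLp 2 (fun k => if (i:ℕ) = m+1 then (-1:ℝ)^(k:ℕ)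
    else if (k:ℕ)+1 = (i:ℕ) ∨ (k:ℕ) = (i:ℕ) then 1 else 0)

lemma inner_sig_eq (m : ℕ) (i j : Fin (m+2)) :
    (inner ℝ (sig m i) (sig m j) : ℝ) = ∑ k : Fin m, sig m i k * sig m j k := by
  simp [PiLp.inner_apply, RCLike.inner_apply, conj_trivial, mul_comm]

lemma sum_ind (m a : ℕ) (ha : a < m) (f : ℕ → ℝ) :
    ∑ k : Fin m, (if (k:ℕ) = a then f (k:ℕ) else 0) = f a := by
  have h : ∀ k : Fin m, (if (k:ℕ) = a then f (k:ℕ) else 0)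
      = (if k = ⟨a, ha⟩ then f (k:ℕ) else 0) := by
    intro k
    exact if_congr (by rw [Fin.ext_iff]) rfl rfl
  rw [Finset.sum_congr rfl (fun k _ => h k),
    Finset.sum_ite_eq' univ ⟨a, ha⟩ (fun k : Fin m => f (k:ℕ))]
  simp

lemma mod_helper {n a b : ℕ} (hn : 2 ≤ n) (ha : a < n) (hb : b < n) :
    ((n - b) + a) % n = 1 ↔ (b + 1 = a ∨ (a = 0 ∧ b + 1 = n)) := by
  rcases le_or_gt b a with h | h
  · have e : (n - b) + a = (a - b) + n := by omega
    rw [e, Nat.add_mod_right, Nat.mod_eq_of_lt (show a - b < n by omega)]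
    omega
  · rw [Nat.mod_eq_of_lt (show (n - b) + a < n by omega)]
    omega

lemma cyc_adj {m : ℕ} (u v : Fin (m+2)) :
    (cycleGraph (m+2)).Adj u v ↔
      (u.val + 1 = v.val ∨ v.val + 1 = u.val ∨
        (u.val = 0 ∧ v.val + 1 = m + 2) ∨ (v.val = 0 ∧ u.val + 1 = m + 2)) := by
  rw [cycleGraph_adj]
  have hu := u.isLt
  have hv := v.isLt
  rw [Fin.ext_iff, Fin.ext_iff, Fin.sub_def, Fin.sub_def]
  simp only [Fin.val_one]
  rw [mod_helper (by omega) hu hv, mod_helper (by omega) hv hu]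
  omega

lemma inner_sig (m : ℕ) (hm : 3 ≤ m) (i j : Fin (m+2)) (hij : (i:ℕ) < (j:ℕ)) :
    ((inner ℝ (sig m i) (sig m j) : ℝ) = 0) ↔ ¬ (cycleGraph (m+2)).Adj i j := by
  have ha := i.isLt
  have hb := j.isLt
  rw [cyc_adj, inner_sig_eq]
  by_cases hbm : (j:ℕ) = m+1
  · by_cases ha0 : (i:ℕ) = 0
    · have hterm : ∀ k : Fin m, sig m i k * sig m j k
          = (if (k:ℕ) = 0 then (-1:ℝ)^(k:ℕ) else 0) := by
        intro k
        simp only [sig]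
        rw [if_neg (by omega : ¬ (i:ℕ) = m+1), if_pos hbm]
        by_cases hk : (k:ℕ) = 0
        · rw [if_pos (by omega), if_pos hk, one_mul]
        · rw [if_neg (by omega), if_neg hk, zero_mul]
      rw [Finset.sum_congr rfl (fun k _ => hterm k),
        sum_ind m 0 (by omega) (fun t => (-1:ℝ)^t)]
      constructor
      · intro h; norm_num at h
      · intro h; exfalso; apply h; omega
    · by_cases ham : (i:ℕ) = m
      · have hterm : ∀ k : Fin m, sig m i k * sig m j k
            = (if (k:ℕ) = m-1 then (-1:ℝ)^(k:ℕ) else 0) := by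
          intro k
          have hk' := k.isLt
          simp only [sig]
          rw [if_neg (by omega : ¬ (i:ℕ) = m+1), if_pos hbm]
          by_cases hk : (k:ℕ) = m-1
          · rw [if_pos (by omega), if_pos hk, one_mul]
          · rw [if_neg (by omega), if_neg hk, zero_mul]
        rw [Finset.sum_congr rfl (fun k _ => hterm k),
          sum_ind m (m-1) (by omega) (fun t => (-1:ℝ)^t)]
        constructor
        · intro h
          exact absurd h (pow_ne_zero _ (by norm_num))
        · intro h; exfalso; apply h; omega
      · have hterm : ∀ k : Fin m, sig m i k * sig m j k
            = (if (k:ℕ) = (i:ℕ)-1 then (-1:ℝ)^(k:ℕ) else 0)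
              + (if (k:ℕ) = (i:ℕ) then (-1:ℝ)^(k:ℕ) else 0) := by
          intro k
          simp only [sig]
          rw [if_neg (by omega : ¬ (i:ℕ) = m+1), if_pos hbm]
          by_cases hk1 : (k:ℕ) = (i:ℕ)-1
          · rw [if_pos (by omega), if_pos hk1, if_neg (by omega), one_mul, add_zero]
          · by_cases hk2 : (k:ℕ) = (i:ℕ)
            · rw [if_pos (by omega), if_neg hk1, if_pos hk2, one_mul, zero_add]
            · rw [if_neg (by omega), if_neg hk1, if_neg hk2, zero_mul, add_zero]
        rw [Finset.sum_congr rfl (fun k _ => hterm k), Finset.sum_add_distrib,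
          sum_ind m ((i:ℕ)-1) (by omega) (fun t => (-1:ℝ)^t),
          sum_ind m (i:ℕ) (by omega) (fun t => (-1:ℝ)^t)]
        obtain ⟨c, hc⟩ : ∃ c, (i:ℕ) = c+1 := ⟨(i:ℕ)-1, by omega⟩
        have he : ((-1:ℝ))^((i:ℕ)-1) + (-1:ℝ)^(i:ℕ) = 0 := by
          rw [hc, Nat.add_sub_cancel, pow_succ]
          ring
        rw [he]
        constructor
        · intro _; omega
        · intro _; rfl
  · by_cases hba : (j:ℕ) = (i:ℕ)+1
    · have hterm : ∀ k : Fin m, sig m i k * sig m j k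
          = (if (k:ℕ) = (i:ℕ) then (1:ℝ) else 0) := by
        intro k
        simp only [sig]
        rw [if_neg (by omega : ¬ (i:ℕ) = m+1), if_neg (by omega : ¬ (j:ℕ) = m+1)]
        by_cases hk : (k:ℕ) = (i:ℕ)
        · rw [if_pos (by omega), if_pos (by omega), if_pos hk, one_mul]
        · by_cases h1 : ((k:ℕ)+1 = (i:ℕ) ∨ (k:ℕ) = (i:ℕ))
          · rw [if_pos h1, if_neg (by omega), mul_zero, if_neg hk]
          · rw [if_neg h1, zero_mul, if_neg hk]
      rw [Finset.sum_congr rfl (fun k _ => hterm k),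
        sum_ind m (i:ℕ) (by omega) (fun _ => (1:ℝ))]
      constructor
      · intro h; norm_num at h
      · intro h; exfalso; apply h; omega
    · have hterm : ∀ k : Fin m, sig m i k * sig m j k = 0 := by
        intro k
        simp only [sig]
        rw [if_neg (by omega : ¬ (i:ℕ) = m+1), if_neg (by omega : ¬ (j:ℕ) = m+1)]
        by_cases h1 : ((k:ℕ)+1 = (i:ℕ) ∨ (k:ℕ) = (i:ℕ))
        · rw [if_pos h1, if_neg (by omega), mul_zero]
        · rw [if_neg h1, zero_mul]
      rw [Finset.sum_congr rfl (fun k _ => hterm k), Finset.sum_const_zero]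
      constructor
      · intro _; omega
      · intro _; rfl

lemma sig_ne_zero (m : ℕ) (hm : 3 ≤ m) (i : Fin (m+2)) : sig m i ≠ 0 := by
  intro h
  have ha := i.isLt
  by_cases him : (i:ℕ) = m+1
  · have h0 : sig m i ⟨0, by omega⟩ = 0 := by simp [h]
    simp only [sig, him, if_pos rfl] at h0
    norm_num at h0
  · by_cases ha0 : (i:ℕ) = 0
    · have h0 : sig m i ⟨0, by omega⟩ = 0 := by simp [h]
      simp only [sig] at h0
      rw [if_neg (by omega), if_pos (by omega)] at h0
      norm_num at h0
    · have h0 : sig m i ⟨(i:ℕ)-1, by omega⟩ = 0 := by simp [h]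
      simp only [sig] at h0
      rw [if_neg (by omega), if_pos (by omega)] at h0
      norm_num at h0

lemma sig_ne_lt (m : ℕ) (hm : 3 ≤ m) (i j : Fin (m+2)) (hij : (i:ℕ) < (j:ℕ)) :
    sig m i ≠ sig m j := by
  intro h
  have ha := i.isLt
  have hb := j.isLt
  by_cases hbm : (j:ℕ) = m+1
  · by_cases ha1 : (i:ℕ) ≤ 1
    · have h0 : sig m i ⟨2, by omega⟩ = sig m j ⟨2, by omega⟩ := by rw [h]
      simp only [sig] at h0
      rw [if_neg (by omega), if_neg (by simp; omega), if_pos hbm] at h0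
      exact absurd h0.symm (pow_ne_zero _ (by norm_num))
    · have h0 : sig m i ⟨0, by omega⟩ = sig m j ⟨0, by omega⟩ := by rw [h]
      simp only [sig] at h0
      rw [if_neg (by omega), if_neg (by simp; omega), if_pos hbm] at h0
      exact absurd h0.symm (pow_ne_zero _ (by norm_num))
  · by_cases hba : (j:ℕ) = (i:ℕ)+1
    · by_cases ha0 : (i:ℕ) = 0
      · have h0 : sig m i ⟨1, by omega⟩ = sig m j ⟨1, by omega⟩ := by rw [h]
        simp only [sig] at h0
        rw [if_neg (by omega), if_neg (by simp; omega), if_neg (by omega),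
          if_pos (by omega)] at h0
        norm_num at h0
      · have h0 : sig m i ⟨(i:ℕ)-1, by omega⟩ = sig m j ⟨(i:ℕ)-1, by omega⟩ := by rw [h]
        simp only [sig] at h0
        rw [if_neg (by omega), if_pos (by omega), if_neg (by omega),
          if_neg (by simp; omega)] at h0
        norm_num at h0
    · have h0 : sig m i ⟨(i:ℕ), by omega⟩ = sig m j ⟨(i:ℕ), by omega⟩ := by rw [h]
      simp only [sig] at h0
      rw [if_neg (by omega), if_pos (by simp), if_neg (by omega),
        if_neg (by simp; omega)] at h0
      norm_num at h0

lemma upper (m : ℕ) (hm : 3 ≤ m) : HasFOR (cycleGraph (m+2))ᶜ m := by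
  refine ⟨sig m, ?_, fun v => sig_ne_zero m hm v, ?_⟩
  · intro i j h
    by_contra hne
    rcases lt_trichotomy (i:ℕ) (j:ℕ) with hlt | heq | hgt
    · exact sig_ne_lt m hm i j hlt h
    · exact hne (Fin.ext heq)
    · exact sig_ne_lt m hm j i hgt h.symm
  · intro i j hij
    rw [compl_adj]
    have hne : (i:ℕ) ≠ (j:ℕ) := fun h => hij (Fin.ext h)
    rcases lt_or_gt_of_ne hne with hlt | hgt
    · rw [inner_sig m hm i j hlt]
      tauto
    · rw [real_inner_comm, inner_sig m hm j i hgt, adj_comm]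
      tauto

lemma lower (m d : ℕ) (hm : 3 ≤ m) (hd : d < m) :
    ¬ HasFOR (cycleGraph (m+2))ᶜ d := by
  rintro ⟨σ, hinj, hnz, hiff⟩
  have hli : LinearIndependent ℝ (fun k : Fin m => σ ⟨(k:ℕ), by omega⟩) := by
    rw [Fintype.linearIndependent_iff]
    intro g hg
    suffices hmain : ∀ K : ℕ, ∀ hK : K < m, g ⟨K, hK⟩ = 0 by
      intro k
      have := hmain (k:ℕ) k.isLt
      simpa [Fin.eta] using this
    intro K
    induction K using Nat.strong_induction_on with
    | _ K IH =>
    intro hK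
    obtain ⟨W, hWlt, hWne, hWK, hWgt⟩ :
        ∃ W, W < m+2 ∧ W ≠ K ∧
          (W + 1 = K ∨ K + 1 = W ∨ (W = 0 ∧ K + 1 = m+2) ∨ (K = 0 ∧ W + 1 = m+2)) ∧
          (∀ t, K < t → t < m → ¬(W = t) ∧
            ¬(W + 1 = t ∨ t + 1 = W ∨ (W = 0 ∧ t + 1 = m+2) ∨ (t = 0 ∧ W + 1 = m+2))) := by
      rcases Nat.eq_zero_or_pos K with h0 | h0
      · exact ⟨m+1, by omega, by omega, by omega, fun t ht1 ht2 => by omega⟩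
      · exact ⟨K-1, by omega, by omega, by omega, fun t ht1 ht2 => by omega⟩
    set w : Fin (m+2) := ⟨W, hWlt⟩ with hwdef
    have h0 : (inner ℝ (σ w) (∑ k : Fin m, g k • σ ⟨(k:ℕ), by omega⟩) : ℝ) = 0 := by
      rw [hg, inner_zero_right]
    rw [inner_sum] at h0
    have hc : (inner ℝ (σ w) (σ ⟨K, by omega⟩) : ℝ) ≠ 0 := by
      intro hc0
      have hadj : (cycleGraph (m+2)).Adj w ⟨K, by omega⟩ := by
        rw [cyc_adj]; exact hWK
      have hne : w ≠ (⟨K, by omega⟩ : Fin (m+2)) := by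
        intro h; exact hWne (congrArg Fin.val h)
      have := (hiff w ⟨K, by omega⟩ hne).2 hc0
      rw [compl_adj] at this
      exact this.2 hadj
    have hterm : ∀ k : Fin m,
        (inner ℝ (σ w) (g k • σ ⟨(k:ℕ), by omega⟩) : ℝ)
          = if (k:ℕ) = K then g ⟨K, hK⟩ * (inner ℝ (σ w) (σ ⟨K, by omega⟩) : ℝ) else 0 := by
      intro k
      rcases lt_trichotomy (k:ℕ) K with hlt | heq | hgt
      · have hg0 : g k = 0 := by
          have := IH (k:ℕ) hlt k.isLt
          simpa [Fin.eta] using this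
        rw [real_inner_smul_right, hg0, zero_mul, if_neg (by omega)]
      · have hkK : k = (⟨K, hK⟩ : Fin m) := Fin.ext heq
        rw [if_pos heq, real_inner_smul_right, hkK]
      · have hfacts := hWgt (k:ℕ) hgt k.isLt
        have hne : w ≠ (⟨(k:ℕ), by omega⟩ : Fin (m+2)) := by
          intro h
          exact hfacts.1 (congrArg Fin.val h)
        have hcadj : (cycleGraph (m+2))ᶜ.Adj w ⟨(k:ℕ), by omega⟩ := by
          rw [compl_adj]
          refine ⟨hne, ?_⟩
          rw [cyc_adj]
          exact hfacts.2
        have hz := (hiff w ⟨(k:ℕ), by omega⟩ hne).1 hcadj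
        rw [real_inner_smul_right, hz, mul_zero, if_neg (by omega)]
    rw [Finset.sum_congr rfl (fun k _ => hterm k),
      sum_ind m K hK (fun _ => g ⟨K, hK⟩ * (inner ℝ (σ w) (σ ⟨K, by omega⟩) : ℝ))] at h0
    rcases mul_eq_zero.1 h0 with h | h
    · exact h
    · exact absurd h hc
  have hcard := hli.fintype_card_le_finrank
  rw [Fintype.card_fin, finrank_euclideanSpace_fin] at hcard
  omega

end ForRankCycleAux

/-- For `n ≥ 5`, `ρ⊥(C̄_n) = n − 2`: the complement of the cycle `C_n` has a FOR
in `ℝ^(n-2)` and none in any smaller dimension. -/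
theorem stmt_9 (n : ℕ) (hn : 5 ≤ n) :
    HasFOR (SimpleGraph.cycleGraph n)ᶜ (n - 2) ∧
      (∀ d < n - 2, ¬ HasFOR (SimpleGraph.cycleGraph n)ᶜ d) ∧
      forRank (SimpleGraph.cycleGraph n)ᶜ = n - 2 := by
  obtain ⟨m, rfl⟩ : ∃ m, n = m + 2 := ⟨n - 2, by omega⟩
  have hm : 3 ≤ m := by omega
  have hsub : m + 2 - 2 = m := by omega
  rw [hsub]
  refine ⟨ForRankCycleAux.upper m hm, fun d hd => ForRankCycleAux.lower m d hm hd, ?_⟩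
  apply le_antisymm
  · exact Nat.sInf_le (ForRankCycleAux.upper m hm)
  · exact le_csInf ⟨m, ForRankCycleAux.upper m hm⟩
      (fun d hd => not_lt.1 fun h => ForRankCycleAux.lower m d hm h hd)
end

section
/- Let G be a finite simple graph whose vertex set is partitioned into two nonempty sets A and B such that every vertex of A is adjacent in G to every vertex of B (i.e., G is the join of the induced subgraphs G[A] and G[B]). Then ρ⊥(G[A]) + ρ⊥(G[B]) ≤ ρ⊥(G). -/
lemma exists_hasFOR {V : Type*} [Fintype V] (G : SimpleGraph V) : ∃ d, HasFOR G d := by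
  classical
  set ι := V ⊕ (V × V)
  set d := Fintype.card ι with hd
  set e : ι ≃ Fin d := Fintype.equivFin ι with he
  set f : V → ι → ℝ := fun i x =>
    Sum.rec (fun k => if k = i then 1 else 0)
      (fun p => if (p.1 = i ∨ p.2 = i) ∧ ¬ G.Adj p.1 p.2 then 1 else 0) x with hf
  have hf01 : ∀ i x, f i x = 0 ∨ f i x = 1 := by
    intro i x
    cases x with
    | inl k => simp only [hf]; split <;> simp
    | inr p => simp only [hf]; split <;> simp
  have hfnn : ∀ i x, 0 ≤ f i x := by
    intro i x; rcases hf01 i x with h | h <;> rw [h] <;> norm_num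
  set σ : V → EuclideanSpace ℝ (Fin d) := fun i => WithLp.toLp 2 (fun t => f i (e.symm t)) with hσ
  refine ⟨d, σ, ?_, ?_, ?_⟩
  · intro i j hij
    have := congrArg (fun v => v (e (Sum.inl i))) hij
    simp only [hσ, PiLp.toLp_apply, Equiv.symm_apply_apply, hf] at this
    by_contra hne
    simp [hne] at this
  · intro v h
    have := congrArg (fun w => w (e (Sum.inl v))) h
    simp only [hσ, PiLp.toLp_apply, PiLp.zero_apply, Equiv.symm_apply_apply, hf] at this
    simp at this
  · intro i j hij
    have hinner : (inner ℝ (σ i) (σ j) : ℝ) = ∑ x : ι, f i x * f j x := by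
      rw [PiLp.inner_apply]
      simp only [hσ, PiLp.toLp_apply, RCLike.inner_apply, conj_trivial]
      simp only [mul_comm (f j _)]
      exact Equiv.sum_comp e.symm (fun x => f i x * f j x)
    rw [hinner]
    constructor
    · intro hadj
      apply Finset.sum_eq_zero
      intro x _
      cases x with
      | inl k =>
        simp only [hf]
        rcases eq_or_ne k i with rfl | h
        · simp [hij]
        · simp [h]
      | inr p =>
        simp only [hf]
        by_cases h1 : (p.1 = i ∨ p.2 = i) ∧ ¬ G.Adj p.1 p.2
        · by_cases h2 : (p.1 = j ∨ p.2 = j) ∧ ¬ G.Adj p.1 p.2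
          · exfalso
            obtain ⟨h1a, hna⟩ := h1
            obtain ⟨h2a, -⟩ := h2
            rcases h1a with h1a | h1a <;> rcases h2a with h2a | h2a
            · exact hij (h1a ▸ h2a ▸ rfl)
            · exact hna (h1a ▸ h2a ▸ hadj)
            · exact hna (h1a ▸ h2a ▸ hadj.symm)
            · exact hij (h1a ▸ h2a ▸ rfl)
          · simp [h2]
        · simp [h1]
    · intro hzero
      by_contra hadj
      have hterm : f i (Sum.inr (i, j)) * f j (Sum.inr (i, j)) = 1 := by
        simp [hf, hadj]
      have hle : (1 : ℝ) ≤ ∑ x : ι, f i x * f j x := by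
        rw [← hterm]
        exact Finset.single_le_sum (f := fun x => f i x * f j x)
          (fun x _ => mul_nonneg (hfnn i x) (hfnn j x)) (Finset.mem_univ (Sum.inr (i, j)))
      rw [hzero] at hle
      norm_num at hle

-- orthogonality of spans
lemma span_inner_zero {E : Type*} [NormedAddCommGroup E] [InnerProductSpace ℝ E]
    {S T : Set E} (h : ∀ s ∈ S, ∀ t ∈ T, inner ℝ s t = (0 : ℝ)) :
    ∀ u ∈ Submodule.span ℝ S, ∀ w ∈ Submodule.span ℝ T, inner ℝ u w = (0 : ℝ) := by
  have step1 : ∀ t ∈ T, ∀ u ∈ Submodule.span ℝ S, inner ℝ u t = (0 : ℝ) := by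
    intro t ht u hu
    have : Submodule.span ℝ S ≤ LinearMap.ker (innerSL ℝ t : E →ₗ[ℝ] ℝ) := by
      rw [Submodule.span_le]
      intro s hs
      simp only [SetLike.mem_coe, LinearMap.mem_ker, ContinuousLinearMap.coe_coe]
      have : (innerSL ℝ t) s = inner ℝ t s := rfl
      rw [this, real_inner_comm]
      exact h s hs t ht
    have := this hu
    simp only [LinearMap.mem_ker, ContinuousLinearMap.coe_coe] at this
    have h2 : (innerSL ℝ t) u = inner ℝ t u := rfl
    rw [h2] at this
    rw [real_inner_comm]
    exact this
  intro u hu w hw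
  have : Submodule.span ℝ T ≤ LinearMap.ker (innerSL ℝ u : E →ₗ[ℝ] ℝ) := by
    rw [Submodule.span_le]
    intro t ht
    simp only [SetLike.mem_coe, LinearMap.mem_ker, ContinuousLinearMap.coe_coe]
    have h2 : (innerSL ℝ u) t = inner ℝ u t := rfl
    rw [h2]
    exact step1 t ht u hu
  have := this hw
  simp only [LinearMap.mem_ker, ContinuousLinearMap.coe_coe] at this
  exact this

-- restriction to span gives FOR of induced graph
lemma hasFOR_induce_span {V : Type*} {d : ℕ} (G : SimpleGraph V)
    (σ : V → EuclideanSpace ℝ (Fin d)) (hσ : IsFOR G d σ) (A : Set V) :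
    HasFOR (G.induce A) (Module.finrank ℝ (Submodule.span ℝ (σ '' A))) := by
  obtain ⟨hinj, hnz, hadj⟩ := hσ
  set U := Submodule.span ℝ (σ '' A) with hU
  have hmem : ∀ a : A, σ (a : V) ∈ U :=
    fun a => Submodule.subset_span ⟨a, a.2, rfl⟩
  set b := stdOrthonormalBasis ℝ U with hb
  refine ⟨fun a => b.repr ⟨σ (a : V), hmem a⟩, ?_, ?_, ?_⟩
  · intro a a' h
    have := b.repr.injective h
    have h2 : σ (a : V) = σ (a' : V) := congrArg Subtype.val this
    exact Subtype.coe_injective (hinj h2)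
  · intro a h
    rw [LinearIsometryEquiv.map_eq_zero_iff] at h
    exact hnz a (congrArg Subtype.val h)
  · intro a a' hne
    have hne' : (a : V) ≠ (a' : V) := fun h => hne (Subtype.coe_injective h)
    have h1 : (inner ℝ (b.repr ⟨σ (a : V), hmem a⟩) (b.repr ⟨σ (a' : V), hmem a'⟩) : ℝ)
        = inner ℝ (σ (a : V)) (σ (a' : V)) := by
      rw [LinearIsometryEquiv.inner_map_map]
      rfl
    rw [h1]
    have : (G.induce A).Adj a a' ↔ G.Adj (a : V) (a' : V) := by
      simp [SimpleGraph.comap_adj]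
    rw [this]
    exact hadj _ _ hne'

/-- If the vertex set of `G` is partitioned into nonempty sets `A` and `B` with every
vertex of `A` adjacent to every vertex of `B` (so `G` is the join of `G[A]` and `G[B]`),
then `ρ⊥(G[A]) + ρ⊥(G[B]) ≤ ρ⊥(G)`. -/
theorem stmt_13 {V : Type*} [Fintype V] (G : SimpleGraph V) (A B : Set V)
    (hA : A.Nonempty) (hB : B.Nonempty) (hdisj : Disjoint A B)
    (hcover : A ∪ B = Set.univ)
    (hjoin : ∀ a ∈ A, ∀ b ∈ B, G.Adj a b) :
    forRank (G.induce A) + forRank (G.induce B) ≤ forRank G := by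
  have hex := exists_hasFOR G
  have hmem : HasFOR G (forRank G) := Nat.sInf_mem hex
  obtain ⟨σ, hσ⟩ := hmem
  set U := Submodule.span ℝ (σ '' A) with hU
  set W := Submodule.span ℝ (σ '' B) with hW
  have hUA : forRank (G.induce A) ≤ Module.finrank ℝ U :=
    Nat.sInf_le (hasFOR_induce_span G σ hσ A)
  have hWB : forRank (G.induce B) ≤ Module.finrank ℝ W :=
    Nat.sInf_le (hasFOR_induce_span G σ hσ B)
  have horth : ∀ s ∈ σ '' A, ∀ t ∈ σ '' B, inner ℝ s t = (0 : ℝ) := by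
    rintro s ⟨a, ha, rfl⟩ t ⟨b, hb, rfl⟩
    have hne : a ≠ b := fun h => Set.disjoint_left.mp hdisj ha (h ▸ hb)
    exact (hσ.2.2 a b hne).mp (hjoin a ha b hb)
  have hinf : U ⊓ W = ⊥ := by
    rw [Submodule.eq_bot_iff]
    intro x hx
    have hx0 : inner ℝ x x = (0 : ℝ) :=
      span_inner_zero horth x hx.1 x hx.2
    exact inner_self_eq_zero.mp hx0
  have hkey := Submodule.finrank_sup_add_finrank_inf_eq U W
  rw [hinf] at hkey
  simp only [finrank_bot, add_zero] at hkey
  have hle : Module.finrank ℝ (U ⊔ W : Submodule ℝ (EuclideanSpace ℝ (Fin (forRank G))))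
      ≤ forRank G := by
    have := Submodule.finrank_le (U ⊔ W)
    rwa [finrank_euclideanSpace_fin] at this
  calc forRank (G.induce A) + forRank (G.induce B)
      ≤ Module.finrank ℝ U + Module.finrank ℝ W := Nat.add_le_add hUA hWB
    _ = Module.finrank ℝ (U ⊔ W : Submodule ℝ (EuclideanSpace ℝ (Fin (forRank G)))) := hkey.symm
    _ ≤ forRank G := hle
end
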